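/- Let K⁰_{n,n} be the complete bipartite graph on vertex sets {b_0,...,b_{n-1}} and {c_0,...,c_{n-1}} with the edge (b_0,c_0) removed. If π is an orthogonal representation of K⁰_{n,n} into an inner product space H with dim H ≤ 2(n-1), then at least one of the following holds: (1) the span of {π(b_i) : i=1,...,n-1} has dimension < n-1; (2) the span of {π(c_i) : i=1,...,n-1} has dimension < n-1; (3) π(b_0) is orthogonal to π(c_0). -/
import Mathlib


open scoped InnerProductSpace

/-- If `π` is an orthogonal representation of the complete bipartite graph
`K_{n,n}` minus the edge `(b₀, c₀)` (vertices `Fin n ⊕ Fin n`, left part the `b`'s, right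
part the `c`'s) into an inner product space `H` with `dim H ≤ 2(n-1)`, then either the span
of `{π(b_i) : i = 1,…,n-1}` has dimension `< n-1`, or the span of `{π(c_i) : i = 1,…,n-1}`
has dimension `< n-1`, or `π(b₀)` is orthogonal to `π(c₀)`. -/
theorem stmt0 {H : Type*} [NormedAddCommGroup H] [InnerProductSpace ℂ H]
    [FiniteDimensional ℂ H] (n : ℕ) (hn : 2 ≤ n)
    (hdim : Module.finrank ℂ H ≤ 2 * (n - 1))
    (π : Fin n ⊕ Fin n → H) (hπ : ∀ v, π v ≠ 0)
    (horth : ∀ j k : Fin n, (j, k) ≠ ((⟨0, by omega⟩ : Fin n), (⟨0, by omega⟩ : Fin n)) → ⟪π (Sum.inl j), π (Sum.inr k)⟫_ℂ = 0) :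
    Module.finrank ℂ
        (Submodule.span ℂ (Set.range fun i : {i : Fin n // i.1 ≠ 0} => π (Sum.inl i.1)))
        < n - 1 ∨
    Module.finrank ℂ
        (Submodule.span ℂ (Set.range fun i : {i : Fin n // i.1 ≠ 0} => π (Sum.inr i.1)))
        < n - 1 ∨
    ⟪π (Sum.inl (⟨0, by omega⟩ : Fin n)), π (Sum.inr (⟨0, by omega⟩ : Fin n))⟫_ℂ = 0 := by
  set b0 : Fin n := ⟨0, by omega⟩ with hb0
  set B := Submodule.span ℂ (Set.range fun i : {i : Fin n // i.1 ≠ 0} => π (Sum.inl i.1)) with hB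
  set C := Submodule.span ℂ (Set.range fun i : {i : Fin n // i.1 ≠ 0} => π (Sum.inr i.1)) with hC
  by_contra hcon
  push_neg at hcon
  obtain ⟨h1, h2, h3⟩ := hcon
  -- any c-vector (k ≠ 0) is orthogonal to any b-vector
  have key : ∀ j k : Fin n, k ≠ b0 → ⟪π (Sum.inl j), π (Sum.inr k)⟫_ℂ = 0 := by
    intro j k hk
    exact horth j k (by simp [Prod.ext_iff, hk])
  have key' : ∀ j k : Fin n, j ≠ b0 → ⟪π (Sum.inl j), π (Sum.inr k)⟫_ℂ = 0 := by
    intro j k hj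
    exact horth j k (by simp [Prod.ext_iff, hj])
  -- B ⟂ C
  have hBC : B ⟂ C := by
    rw [hB, hC, Submodule.isOrtho_span]
    rintro u ⟨⟨j, hj⟩, rfl⟩ v ⟨⟨k, hk⟩, rfl⟩
    exact key j k (by simpa [hb0, Fin.ext_iff] using hk)
  have hCle : C ≤ Bᗮ := hBC.ge
  have hBfin : Module.finrank ℂ B + Module.finrank ℂ Bᗮ = Module.finrank ℂ H :=
    B.finrank_add_finrank_orthogonal
  have hCeq : C = Bᗮ := by
    apply Submodule.eq_of_le_of_finrank_le hCle
    omega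
  -- π (inl b0) ∈ Cᗮ
  have hb0mem : π (Sum.inl b0) ∈ Cᗮ := by
    have : C ⟂ Submodule.span ℂ {π (Sum.inl b0)} := by
      rw [hC, Submodule.isOrtho_span]
      rintro u ⟨⟨k, hk⟩, rfl⟩ v rfl
      have := key b0 k (by simpa [hb0, Fin.ext_iff] using hk)
      rwa [inner_eq_zero_symm] at this
    exact this.ge (Submodule.mem_span_singleton_self _)
  -- π (inr b0) ∈ Bᗮ
  have hc0mem : π (Sum.inr b0) ∈ Bᗮ := by
    have : B ⟂ Submodule.span ℂ {π (Sum.inr b0)} := by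
      rw [hB, Submodule.isOrtho_span]
      rintro u ⟨⟨j, hj⟩, rfl⟩ v rfl
      exact key' j b0 (by simpa [hb0, Fin.ext_iff] using hj)
    exact this.ge (Submodule.mem_span_singleton_self _)
  have hb0B : π (Sum.inl b0) ∈ B := by
    rw [hCeq, Submodule.orthogonal_orthogonal] at hb0mem
    exact hb0mem
  exact h3 ((Submodule.mem_orthogonal B (π (Sum.inr b0))).mp hc0mem _ hb0B)
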